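/- For integers n ≥ 1 and l ≥ 0, define H(n, l) = A_{3l}^{n,3} − n·binom(n, 2l−1) + [l = 2]·binom(n, 2), where binom(n, 2l−1) is interpreted as 0 when l = 0 and [l = 2] equals 1 if l = 2 and 0 otherwise. Then for every natural number I there exists a natural number N(I) such that for all n ≥ N(I), the sequence H(n, 0), H(n, 1), …, H(n, I) is nondecreasing: H(n, l−1) ≤ H(n, l) for all 1 ≤ l ≤ I. (The numbers H(n, l) are the entries of the h*-vector of the matroid polytope of the uniform matroid U^{3,n}; thus the h*-vector of U^{3,n} is nondecreasing from index 0 to I for all sufficiently large n.) -/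

import Mathlib

/-- The Katzman coefficient `A_i^{n,r}`: the coefficient of `T^i` in `(1 + T + ⋯ + T^(r-1))^n`. -/
noncomputable def katz (n r i : ℕ) : ℕ :=
  ((∑ j ∈ Finset.range r, (Polynomial.X : Polynomial ℕ) ^ j) ^ n).coeff i

lemma katz_zero' (i : ℕ) : katz 0 3 i = if i = 0 then 1 else 0 := by
  simp [katz, Polynomial.coeff_one]

lemma katz_succ' (n i : ℕ) : katz (n+1) 3 i =
    katz n 3 i + (if 1 ≤ i then katz n 3 (i-1) else 0)
      + (if 2 ≤ i then katz n 3 (i-2) else 0) := by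
  unfold katz
  set p : Polynomial ℕ := (∑ j ∈ Finset.range 3, Polynomial.X ^ j) ^ n with hp
  have key : (∑ j ∈ Finset.range 3, (Polynomial.X : Polynomial ℕ) ^ j) ^ (n+1)
      = p + p * Polynomial.X ^ 1 + p * Polynomial.X ^ 2 := by
    rw [pow_succ, hp,
      show (∑ j ∈ Finset.range 3, (Polynomial.X : Polynomial ℕ) ^ j)
          = 1 + Polynomial.X + Polynomial.X ^ 2 by simp [Finset.sum_range_succ]]
    ring
  rw [key]
  simp only [Polynomial.coeff_add, Polynomial.coeff_mul_X_pow']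

lemma choose_le_katz (n i : ℕ) : n.choose i ≤ katz n 3 i := by
  induction n generalizing i with
  | zero => rw [katz_zero']; cases i <;> simp
  | succ n ih =>
    rw [katz_succ']
    rcases Nat.eq_zero_or_pos i with rfl | hi
    · simpa using ih 0
    · obtain ⟨j, rfl⟩ := Nat.exists_eq_add_of_le hi
      rw [Nat.add_comm 1 j, Nat.choose_succ_succ]
      simp only [Nat.succ_eq_add_one, if_pos (by omega : (1:ℕ) ≤ j + 1), Nat.add_sub_cancel]
      have := ih (j+1); have := ih j
      omega

lemma katz_le_choose (n i : ℕ) : katz n 3 i ≤ (2*n).choose i := by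
  induction n generalizing i with
  | zero => rw [katz_zero']; cases i <;> simp
  | succ n ih =>
    rw [katz_succ']
    have e : 2 * (n+1) = (2*n+1) + 1 := by ring
    rw [e]
    rcases Nat.lt_or_ge i 2 with hi | hi
    · have h0 := ih 0; have h1 := ih 1
      simp only [Nat.choose_zero_right, Nat.choose_one_right] at h0 h1
      interval_cases i <;>
        simp [Nat.choose_one_right] <;> omega
    · obtain ⟨j, rfl⟩ := Nat.exists_eq_add_of_le hi
      rw [Nat.add_comm 2 j]
      simp only [if_pos (by omega : (1:ℕ) ≤ j + 2), if_pos (by omega : (2:ℕ) ≤ j + 2),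
        Nat.add_sub_cancel, show j + 2 - 1 = j + 1 by omega]
      have h2 := ih (j+2); have h1 := ih (j+1); have h0 := ih j
      have p1 : (2*n+1+1).choose (j+2) = (2*n+1).choose (j+1) + (2*n+1).choose (j+2) :=
        Nat.choose_succ_succ _ _
      have p2 : (2*n+1).choose (j+1) = (2*n).choose j + (2*n).choose (j+1) :=
        Nat.choose_succ_succ _ _
      have p3 : (2*n+1).choose (j+2) = (2*n).choose (j+1) + (2*n).choose (j+2) :=
        Nat.choose_succ_succ _ _
      omega

lemma key_ineq (l n : ℕ) (hl : 1 ≤ l)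
    (hn : 3 * 4^(3*l) * (3*l).factorial + 6*l ≤ n) :
    (2*n).choose (3*l-3) + n * n.choose (2*l-1) + n.choose 2 ≤ n.choose (3*l) := by
  set k := 3*l with hk
  have hk3 : 3 ≤ k := by omega
  have hn1 : 1 ≤ n := by omega
  have hbig : 3 * 4^k * k.factorial ≤ n := by omega
  have h2k : 2*k ≤ n := by
    have : k ≤ 4^k * k.factorial := le_mul_of_one_le_of_le
      (Nat.one_le_pow _ _ (by norm_num)) (Nat.self_le_factorial k)
    omega
  have t1 : (2*n).choose (k-3) ≤ 2^k * n^(k-1) := by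
    calc (2*n).choose (k-3) ≤ (2*n)^(k-3) := Nat.choose_le_pow _ _
    _ ≤ (2*n)^(k-1) := Nat.pow_le_pow_right (by omega) (by omega)
    _ = 2^(k-1) * n^(k-1) := by rw [Nat.mul_pow]
    _ ≤ 2^k * n^(k-1) := Nat.mul_le_mul_right _ (Nat.pow_le_pow_right (by norm_num) (by omega))
  have t2 : n * n.choose (2*l-1) ≤ n^(k-1) := by
    calc n * n.choose (2*l-1) ≤ n * n^(2*l-1) := Nat.mul_le_mul_left _ (Nat.choose_le_pow _ _)
    _ = n^(2*l-1+1) := by rw [pow_succ, Nat.mul_comm]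
    _ ≤ n^(k-1) := Nat.pow_le_pow_right hn1 (by omega)
  have t3 : n.choose 2 ≤ n^(k-1) :=
    (Nat.choose_le_pow _ _).trans (Nat.pow_le_pow_right hn1 (by omega))
  have lhs_le : (2*n).choose (k-3) + n * n.choose (2*l-1) + n.choose 2
      ≤ 3 * 2^k * n^(k-1) := by
    have h1 : n^(k-1) ≤ 2^k * n^(k-1) :=
      Nat.le_mul_of_pos_left _ (Nat.pow_pos (by norm_num))
    have h2 : 3 * 2^k * n^(k-1) = 2^k * n^(k-1) + 2^k * n^(k-1) + 2^k * n^(k-1) := by ring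
    rw [h2]
    exact add_le_add (add_le_add t1 (t2.trans h1)) (t3.trans h1)
  have low : (n+1-k)^k ≤ k.factorial * n.choose k := by
    rw [← Nat.descFactorial_eq_factorial_mul_choose]
    exact Nat.pow_sub_le_descFactorial n k
  have nk : n^k ≤ 2^k * (n+1-k)^k := by
    rw [← Nat.mul_pow]
    exact Nat.pow_le_pow_left (by omega) k
  have main : 2^k * k.factorial * ((2*n).choose (k-3) + n * n.choose (2*l-1) + n.choose 2)
      ≤ 2^k * k.factorial * n.choose k := by
    calc 2^k * k.factorial * ((2*n).choose (k-3) + n * n.choose (2*l-1) + n.choose 2)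
        ≤ 2^k * k.factorial * (3 * 2^k * n^(k-1)) := Nat.mul_le_mul_left _ lhs_le
      _ = (3 * 4^k * k.factorial) * n^(k-1) := by
          rw [show (4:ℕ)^k = 2^k * 2^k from by rw [← Nat.mul_pow]]; ring
      _ ≤ n * n^(k-1) := Nat.mul_le_mul_right _ hbig
      _ = n^k := by rw [← pow_succ']; congr 1; omega
      _ ≤ 2^k * (n+1-k)^k := nk
      _ ≤ 2^k * (k.factorial * n.choose k) := Nat.mul_le_mul_left _ low
      _ = 2^k * k.factorial * n.choose k := by ring
  exact Nat.le_of_mul_le_mul_left main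
    (Nat.mul_pos (Nat.pow_pos (by norm_num)) k.factorial_pos)

/-- Let `H n l = A_{3l}^{n,3} - n·C(n,2l-1) + [l=2]·C(n,2)` (the `l`-th entry
of the `h*`-vector of the matroid polytope of `U^{3,n}`; here `C(n,2l-1)` is read as `0` for
`l = 0`).  For every `I` there is `N(I)` such that for all `n ≥ N(I)` the sequence
`H n 0, H n 1, …, H n I` is nondecreasing. -/
theorem hstar_U3n_partially_unimodal (H : ℕ → ℕ → ℤ)
    (hH : ∀ n l : ℕ, H n l =
      (katz n 3 (3 * l) : ℤ) - n * (if l = 0 then 0 else (n.choose (2 * l - 1) : ℤ)) +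
        (if l = 2 then (n.choose 2 : ℤ) else 0)) :
    ∀ I : ℕ, ∃ N : ℕ, ∀ n : ℕ, N ≤ n → ∀ l : ℕ, 1 ≤ l → l ≤ I → H n (l - 1) ≤ H n l := by
  intro I
  refine ⟨3 * 4^(3*I) * (3*I).factorial + 6*I, fun n hn l hl hlI => ?_⟩
  have hmono : 3 * 4^(3*l) * (3*l).factorial + 6*l ≤ n := by
    have h1 : (4:ℕ)^(3*l) ≤ 4^(3*I) := Nat.pow_le_pow_right (by norm_num) (by omega)
    have h2 : (3*l).factorial ≤ (3*I).factorial := Nat.factorial_le (by omega)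
    have h3 : 3 * 4^(3*l) * (3*l).factorial ≤ 3 * 4^(3*I) * (3*I).factorial :=
      Nat.mul_le_mul (Nat.mul_le_mul_left _ h1) h2
    omega
  have hkey := key_ineq l n hl hmono
  have h1 : katz n 3 (3*(l-1)) ≤ (2*n).choose (3*l-3) := by
    rw [show 3*(l-1) = 3*l - 3 by omega] at *
    exact katz_le_choose n _
  have h2 : n.choose (3*l) ≤ katz n 3 (3*l) := choose_le_katz n _
  have hmain : (katz n 3 (3*(l-1)) : ℤ) + n * n.choose (2*l-1) + n.choose 2
      ≤ katz n 3 (3*l) := by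
    have : katz n 3 (3*(l-1)) + n * n.choose (2*l-1) + n.choose 2 ≤ katz n 3 (3*l) := by
      omega
    exact_mod_cast this
  rw [hH n l, hH n (l-1), if_neg (by omega : ¬ l = 0)]
  have hs : (0:ℤ) ≤ n * (if l - 1 = 0 then 0 else (n.choose (2*(l-1) - 1) : ℤ)) := by
    split_ifs <;> positivity
  have hi1 : (if l - 1 = 2 then (n.choose 2 : ℤ) else 0) ≤ n.choose 2 := by
    split_ifs
    · exact le_refl _
    · positivity
  have hi2 : (0:ℤ) ≤ (if l = 2 then (n.choose 2 : ℤ) else 0) := by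
    split_ifs
    · positivity
    · exact le_refl _
  linarith
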